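/- arXiv:1002.2357 — 5 statements merged into one kernel-verified Lean document; each statement's English description precedes it below -/
import Mathlib

section
/- Let E be a set and 𝒞 a collection of pairwise incomparable (under inclusion) finite subsets of E. Suppose that for every modular pair A, B ∈ 𝒞 (i.e., the interval below A ∪ B in the lattice of unions of members of 𝒞 has length 2) and every e ∈ A ∩ B, there exists C ∈ 𝒞 with C ⊆ (A ∪ B) \ {e}. Then for EVERY pair A, B ∈ 𝒞 with A ≠ B and every e ∈ A ∩ B, there exists C ∈ 𝒞 with C ⊆ (A ∪ B) \ {e}. -/
open Set

variable {α : Type*}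

/-- The set `U(𝒞)` of all unions of subfamilies of `𝒞`, as a set of sets
(ordered by inclusion). -/
def unionsOf (𝒞 : Set (Set α)) : Set (Set α) := {Z | ∃ 𝒯 ⊆ 𝒞, Z = ⋃₀ 𝒯}

/-- There is a strictly increasing chain of `n + 1` elements of `U`,
all contained in `Z` (i.e. a chain of length `n` in `U_{≤ Z}`). -/
def HasChainBelow (U : Set (Set α)) (Z : Set α) (n : ℕ) : Prop :=
  ∃ c : Fin (n + 1) → Set α, StrictMono c ∧ ∀ i, c i ∈ U ∧ c i ⊆ Z

/-- The maximal length of a chain in `U_{≤ Z}` is exactly `n`. -/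
def LengthBelowEq (U : Set (Set α)) (Z : Set α) (n : ℕ) : Prop :=
  HasChainBelow U Z n ∧ ¬ HasChainBelow U Z (n + 1)

/-- `A, B ∈ 𝒞` are a modular pair: the interval below `A ∪ B` in the lattice
`U(𝒞)` of unions of members of `𝒞` has length `2`. -/
def IsModularPair (𝒞 : Set (Set α)) (A B : Set α) : Prop :=
  LengthBelowEq (unionsOf 𝒞) (A ∪ B) 2

/-- The elimination property `ℰ(A, B, 𝒞)`. -/
def Elim (𝒞 : Set (Set α)) (A B : Set α) : Prop :=
  ∀ e ∈ A ∩ B, ∃ C ∈ 𝒞, C ⊆ (A ∪ B) \ {e}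

/-- The members of `𝒞` are pairwise incomparable under inclusion. -/
def PairwiseIncomparable (𝒞 : Set (Set α)) : Prop :=
  ∀ A ∈ 𝒞, ∀ B ∈ 𝒞, A ⊆ B → A = B

/-- **Theorem (modular elimination suffices).** If the elimination property
holds for all modular pairs of a pairwise incomparable family of finite sets,
then it holds for all pairs. -/
theorem elim_of_modular_elim (𝒞 : Set (Set α))
    (hfin : ∀ C ∈ 𝒞, C.Finite)
    (hinc : PairwiseIncomparable 𝒞)
    (hmod : ∀ A ∈ 𝒞, ∀ B ∈ 𝒞, IsModularPair 𝒞 A B → Elim 𝒞 A B) :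
    ∀ A ∈ 𝒞, ∀ B ∈ 𝒞, A ≠ B → Elim 𝒞 A B := by
  intro A₀ hA₀ B₀ hB₀ hne₀
  suffices h : ∀ n A, A ∈ 𝒞 → ∀ B ∈ 𝒞, A ≠ B → (A ∪ B).ncard ≤ n → Elim 𝒞 A B from
    h (A₀ ∪ B₀).ncard A₀ hA₀ B₀ hB₀ hne₀ le_rfl
  intro n
  induction n using Nat.strong_induction_on with
  | _ n ih =>
    intro A hA B hB hAB hcard e he
    by_contra hcon
    push_neg at hcon
    have hABfin : (A ∪ B).Finite := (hfin A hA).union (hfin B hB)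
    have fact1 : ∀ D ∈ 𝒞, D ⊆ A ∪ B → e ∈ D := by
      intro D hD hsub
      by_contra heD
      exact hcon D hD (Set.subset_diff_singleton hsub heD)
    have elim_small : ∀ P ∈ 𝒞, ∀ Q ∈ 𝒞, P ≠ Q → P ∪ Q ⊂ A ∪ B → False := by
      intro P hP Q hQ hPQ hss
      have heP : e ∈ P := fact1 P hP (subset_union_left.trans hss.subset)
      have heQ : e ∈ Q := fact1 Q hQ (subset_union_right.trans hss.subset)
      obtain ⟨C, hC, hCsub⟩ :=
        ih (P ∪ Q).ncard (lt_of_lt_of_le (Set.ncard_lt_ncard hss hABfin) hcard)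
          P hP Q hQ hPQ le_rfl e ⟨heP, heQ⟩
      exact hcon C hC (hCsub.trans (Set.diff_subset_diff_left hss.subset))
    -- `A` is nonempty and a proper subset of `A ∪ B`
    have hAne : A.Nonempty := by
      rcases A.eq_empty_or_nonempty with h | h
      · exact absurd (hinc A hA B hB (h ▸ empty_subset B)) hAB
      · exact h
    have hAssub : A ⊂ A ∪ B := by
      refine ⟨subset_union_left, fun h => ?_⟩
      exact hAB (hinc B hB A hA (subset_union_right.trans h)).symm
    -- the pair has a chain of length 2 below `A ∪ B`
    have hc2 : HasChainBelow (unionsOf 𝒞) (A ∪ B) 2 := by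
      refine ⟨![∅, A, A ∪ B], ?_, ?_⟩
      · intro i j hij
        fin_cases i <;> fin_cases j <;>
          simp only [Matrix.cons_val_zero, Matrix.cons_val_one, Matrix.head_cons,
            Matrix.cons_val_two, Matrix.tail_cons] <;>
          first
            | exact absurd hij (by decide)
            | exact Set.empty_ssubset.2 hAne
            | exact hAssub
            | exact (Set.empty_ssubset.2 hAne).trans hAssub
      · intro i
        fin_cases i
        · exact ⟨⟨∅, empty_subset _, by simp⟩, empty_subset _⟩
        · exact ⟨⟨{A}, by simpa using hA, by simp⟩, subset_union_left⟩
        · exact ⟨⟨{A, B}, by simp [hA, hB, Set.insert_subset_iff],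
            by simp⟩, subset_rfl⟩
    -- since elimination fails, the pair is not modular, so there is a longer chain
    have hc3 : HasChainBelow (unionsOf 𝒞) (A ∪ B) 3 := by
      by_contra h3
      obtain ⟨C, hC, hCsub⟩ := hmod A hA B hB ⟨hc2, h3⟩ e he
      exact hcon C hC hCsub
    obtain ⟨c, hcm, hcprop⟩ := hc3
    have h01 : c 0 ⊂ c 1 := hcm (by decide : (0 : Fin 4) < 1)
    have h12 : c 1 ⊂ c 2 := hcm (by decide : (1 : Fin 4) < 2)
    have h23 : c 2 ⊂ c 3 := hcm (by decide : (2 : Fin 4) < 3)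
    have hc2AB : c 2 ⊂ A ∪ B := h23.trans_subset (hcprop 3).2
    -- pick a member `D ⊆ c 1`
    obtain ⟨x, hx1, -⟩ := Set.exists_of_ssubset h01
    obtain ⟨𝒯₁, h𝒯₁, hU₁⟩ := (hcprop 1).1
    rw [hU₁] at hx1
    obtain ⟨D, hD𝒯, hxD⟩ := hx1
    have hDsub : D ⊆ c 1 := hU₁ ▸ Set.subset_sUnion_of_mem hD𝒯
    -- pick a member `D' ⊆ c 2` containing a point outside `c 1`
    obtain ⟨y, hy2, hy1⟩ := Set.exists_of_ssubset h12
    obtain ⟨𝒯₂, h𝒯₂, hU₂⟩ := (hcprop 2).1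
    rw [hU₂] at hy2
    obtain ⟨D', hD'𝒯, hyD'⟩ := hy2
    have hD'sub : D' ⊆ c 2 := hU₂ ▸ Set.subset_sUnion_of_mem hD'𝒯
    have hDD' : D ≠ D' := by
      rintro rfl
      exact hy1 (hDsub hyD')
    exact elim_small D (h𝒯₁ hD𝒯) D' (h𝒯₂ hD'𝒯) hDD'
      (lt_of_le_of_lt (union_subset (hDsub.trans h12.subset) hD'sub) hc2AB)
end

section
/- A collection 𝒞 of pairwise incomparable nonempty subsets of a finite set E is the set of circuits of a matroid on E if (and only if) the elimination property ℰ(A, B, 𝒞) holds for all modular pairs A, B ∈ 𝒞. -/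
open Set

variable {α : Type*}

/-- `𝒞` is the set of circuits of a matroid with ground set `E`
(circuits = minimal dependent sets). -/
def IsCircuitSetOf (𝒞 : Set (Set α)) (E : Set α) : Prop :=
  ∃ M : Matroid α, M.E = E ∧ ∀ C : Set α, Minimal M.Dep C ↔ C ∈ 𝒞

lemma empty_mem_unionsOf {𝒞 : Set (Set α)} : (∅ : Set α) ∈ unionsOf 𝒞 :=
  ⟨∅, by simp, by simp⟩

lemma mem_unionsOf_self {𝒞 : Set (Set α)} {A : Set α} (hA : A ∈ 𝒞) : A ∈ unionsOf 𝒞 :=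
  ⟨{A}, by simpa, by simp⟩

lemma union_mem_unionsOf {𝒞 : Set (Set α)} {A B : Set α} (hA : A ∈ 𝒞) (hB : B ∈ 𝒞) :
    A ∪ B ∈ unionsOf 𝒞 := ⟨{A, B}, by simp [insert_subset_iff, hA, hB], by simp⟩

lemma hasChain2 {𝒞 : Set (Set α)} (hne : ∀ C ∈ 𝒞, C.Nonempty)
    (hinc : PairwiseIncomparable 𝒞) {A B : Set α} (hA : A ∈ 𝒞) (hB : B ∈ 𝒞) (hAB : A ≠ B) :
    HasChainBelow (unionsOf 𝒞) (A ∪ B) 2 := by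
  have h1 : (∅ : Set α) ⊂ A := (hne A hA).empty_ssubset
  have h2 : A ⊂ A ∪ B := by
    refine ssubset_of_subset_of_ne subset_union_left fun h => ?_
    exact hAB ((hinc B hB A hA (by rw [h]; exact subset_union_right)).symm)
  refine ⟨![∅, A, A ∪ B], ?_, ?_⟩
  · intro i j hij
    fin_cases i <;> fin_cases j <;> simp_all
  · intro i
    fin_cases i <;>
      simp [empty_mem_unionsOf, mem_unionsOf_self hA, union_mem_unionsOf hA hB, h2.subset]

/-- A nonempty member of `unionsOf 𝒞` contains a member of `𝒞`. -/
lemma exists_mem_subset_of_unionsOf {𝒞 : Set (Set α)} {Z : Set α} (hZ : Z ∈ unionsOf 𝒞)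
    (hZne : Z.Nonempty) : ∃ D ∈ 𝒞, D ⊆ Z := by
  obtain ⟨𝒯, h𝒯, rfl⟩ := hZ
  obtain ⟨z, t, ht, hzt⟩ := hZne
  exact ⟨t, h𝒯 ht, subset_sUnion_of_mem ht⟩

lemma exists_circuit_between {𝒞 : Set (Set α)} (hne : ∀ C ∈ 𝒞, C.Nonempty)
    (hinc : PairwiseIncomparable 𝒞) {A B : Set α} (hA : A ∈ 𝒞) (hB : B ∈ 𝒞) (hAB : A ≠ B)
    (hmod : ¬ IsModularPair 𝒞 A B) :
    ∃ D ∈ 𝒞, ∃ Z ∈ unionsOf 𝒞, D ⊂ Z ∧ Z ⊂ A ∪ B := by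
  have h3 : HasChainBelow (unionsOf 𝒞) (A ∪ B) 3 := by
    by_contra h3
    exact hmod ⟨hasChain2 hne hinc hA hB hAB, h3⟩
  obtain ⟨c, hc, hmem⟩ := h3
  have h01 : c 0 ⊂ c 1 := hc (by decide)
  have h12 : c 1 ⊂ c 2 := hc (by decide)
  have h23 : c 2 ⊂ c 3 := hc (by decide)
  have hc1ne : (c 1).Nonempty := by
    rw [nonempty_iff_ne_empty]
    intro h
    exact h01.ne ((subset_empty_iff.mp (h ▸ h01.subset)).trans h.symm)
  obtain ⟨D, hD, hDc1⟩ := exists_mem_subset_of_unionsOf (hmem 1).1 hc1ne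
  exact ⟨D, hD, c 2, (hmem 2).1, lt_of_le_of_lt hDc1 h12,
    lt_of_lt_of_le h23 (hmem 3).2⟩

lemma full_elim {E : Set α} (hE : E.Finite) {𝒞 : Set (Set α)} (hsub : ∀ C ∈ 𝒞, C ⊆ E)
    (hne : ∀ C ∈ 𝒞, C.Nonempty) (hinc : PairwiseIncomparable 𝒞)
    (hmod : ∀ A ∈ 𝒞, ∀ B ∈ 𝒞, IsModularPair 𝒞 A B → Elim 𝒞 A B) :
    ∀ n, ∀ A ∈ 𝒞, ∀ B ∈ 𝒞, A ≠ B → (A ∪ B).ncard ≤ n →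
      ∀ e ∈ A ∩ B, ∃ C ∈ 𝒞, C ⊆ (A ∪ B) \ {e} := by
  intro n
  induction n with
  | zero =>
    intro A hA B hB hAB hcard e he
    have hfin : (A ∪ B).Finite := hE.subset (union_subset (hsub A hA) (hsub B hB))
    have : A ∪ B = ∅ := by
      rw [← ncard_eq_zero hfin] at *; omega
    exact absurd (this ▸ (subset_union_left (s := A) (t := B)) he.1) (notMem_empty e)
  | succ n ih =>
    intro A hA B hB hAB hcard e he
    by_cases hm : IsModularPair 𝒞 A B
    · exact hmod A hA B hB hm e he
    obtain ⟨D, hD, Z, hZ, hDZ, hZAB⟩ := exists_circuit_between hne hinc hA hB hAB hm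
    obtain ⟨z, hzZ, hzD⟩ := exists_of_ssubset hDZ
    obtain ⟨𝒯, h𝒯, rfl⟩ := hZ
    obtain ⟨F, hF𝒯, hzF⟩ := hzZ
    have hF : F ∈ 𝒞 := h𝒯 hF𝒯
    have hFZ : F ⊆ ⋃₀ 𝒯 := subset_sUnion_of_mem hF𝒯
    by_cases heD : e ∈ D
    · by_cases heF : e ∈ F
      · -- apply induction on the pair (D, F)
        have hDF : D ≠ F := fun h => hzD (h ▸ hzF)
        have hss : D ∪ F ⊂ A ∪ B := lt_of_le_of_lt (union_subset hDZ.subset hFZ) hZAB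
        have hcard' : (D ∪ F).ncard ≤ n := by
          have hfin : (A ∪ B).Finite := hE.subset (union_subset (hsub A hA) (hsub B hB))
          have := ncard_lt_ncard hss hfin
          omega
        obtain ⟨C, hC, hCsub⟩ := ih D hD F hF hDF hcard' e ⟨heD, heF⟩
        exact ⟨C, hC, hCsub.trans (diff_subset_diff_left hss.subset)⟩
      · exact ⟨F, hF, fun x hx => ⟨hZAB.subset (hFZ hx), fun hxe => heF (hxe ▸ hx)⟩⟩
    · exact ⟨D, hD, fun x hx =>
        ⟨hZAB.subset (hDZ.subset hx), fun hxe => heD (hxe ▸ hx)⟩⟩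

/-- `I` is independent: contained in `E` and contains no member of `𝒞`. -/
def CIndep (E : Set α) (𝒞 : Set (Set α)) (I : Set α) : Prop :=
  I ⊆ E ∧ ∀ C ∈ 𝒞, ¬ C ⊆ I

lemma CIndep.subset {E : Set α} {𝒞 : Set (Set α)} {I J : Set α} (hJ : CIndep E 𝒞 J)
    (hIJ : I ⊆ J) : CIndep E 𝒞 I :=
  ⟨hIJ.trans hJ.1, fun C hC hCI => hJ.2 C hC (hCI.trans hIJ)⟩

lemma cIndep_aug {E : Set α} (hE : E.Finite) {𝒞 : Set (Set α)}
    (helim : ∀ A ∈ 𝒞, ∀ B ∈ 𝒞, A ≠ B → ∀ e ∈ A ∩ B, ∃ C ∈ 𝒞, C ⊆ (A ∪ B) \ {e}) :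
    ∀ ⦃I J : Set α⦄, CIndep E 𝒞 I → CIndep E 𝒞 J → I.ncard < J.ncard →
      ∃ e ∈ J, e ∉ I ∧ CIndep E 𝒞 (insert e I) := by
  intro I J hI hJ hIJ
  by_contra hcon
  push_neg at hcon
  -- the set of candidate large independent sets
  set S : Set (Set α) := {K | K ⊆ I ∪ J ∧ CIndep E 𝒞 K ∧ I.ncard < K.ncard} with hS
  have hJS : J ∈ S := ⟨subset_union_right, hJ, hIJ⟩
  -- choose K ∈ S minimizing (I \ K).ncard
  have hne' : ((fun K => (I \ K).ncard) '' S).Nonempty := ⟨_, J, hJS, rfl⟩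
  obtain ⟨K, hKS, hKmin⟩ : ∃ K ∈ S, (I \ K).ncard = sInf ((fun K => (I \ K).ncard) '' S) := by
    have := Nat.sInf_mem hne'
    obtain ⟨K, hK, hK'⟩ := this
    exact ⟨K, hK, hK'⟩
  obtain ⟨hKIJ, hK, hIK⟩ := hKS
  have hIfin : I.Finite := hE.subset hI.1
  have hKfin : K.Finite := hE.subset hK.1
  by_cases hdiff : I \ K = ∅
  · -- I ⊆ K, so we can augment directly, contradicting hcon
    have hIsubK : I ⊆ K := diff_eq_empty.mp hdiff
    have : ∃ x, x ∈ K \ I := by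
      by_contra h
      push_neg at h
      have : K ⊆ I := fun x hx => by_contra fun hxI => h x ⟨hx, hxI⟩
      exact absurd hIK (by rw [hIsubK.antisymm this]; omega)
    obtain ⟨x, hxK, hxI⟩ := this
    have hxJ : x ∈ J := (hKIJ hxK).resolve_left hxI
    exact hcon x hxJ hxI (hK.subset (insert_subset hxK hIsubK))
  · -- pick f ∈ I \ K and run the circuit argument
    obtain ⟨f, hfI, hfK⟩ := nonempty_iff_ne_empty.mpr hdiff
    -- for every g ∈ K \ I, the set `insert f (K \ {g})` is dependent
    have hdep : ∀ g ∈ K \ I, ∃ C ∈ 𝒞, C ⊆ insert f (K \ {g}) ∧ f ∈ C ∧ g ∉ C := by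
      rintro g ⟨hgK, hgI⟩
      have hfg : f ≠ g := fun h => hgI (h ▸ hfI)
      have hTsub : insert f (K \ {g}) ⊆ I ∪ J :=
        insert_subset (Or.inl hfI) ((diff_subset).trans hKIJ)
      have hTE : insert f (K \ {g}) ⊆ E := hTsub.trans (union_subset hI.1 hJ.1)
      have hTcard : (insert f (K \ {g})).ncard = K.ncard := by
        have h1 : f ∉ K \ {g} := fun h => hfK h.1
        rw [ncard_insert_of_notMem h1 hKfin.diff,
          ncard_diff_singleton_of_mem hgK]
        have : 1 ≤ K.ncard := (ncard_pos hKfin).mpr ⟨g, hgK⟩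
        omega
      -- if it were independent, it would contradict minimality of (I \ K).ncard
      have hTdep : ¬ CIndep E 𝒞 (insert f (K \ {g})) := by
        intro hT
        have hTS : insert f (K \ {g}) ∈ S := ⟨hTsub, hT, by omega⟩
        have hle : sInf ((fun K => (I \ K).ncard) '' S) ≤ (I \ insert f (K \ {g})).ncard :=
          Nat.sInf_le ⟨_, hTS, rfl⟩
        have hsub2 : I \ insert f (K \ {g}) ⊆ I \ K := by
          rintro x ⟨hxI, hxT⟩
          refine ⟨hxI, fun hxK => hxT ?_⟩
          rcases eq_or_ne x g with rfl | hxg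
          · exact absurd hxI hgI
          · exact Or.inr ⟨hxK, hxg⟩
        have hfmem : f ∈ (I \ K) \ (I \ insert f (K \ {g})) :=
          ⟨⟨hfI, hfK⟩, fun h => h.2 (mem_insert f _)⟩
        have hlt : (I \ insert f (K \ {g})).ncard < (I \ K).ncard :=
          ncard_lt_ncard (ssubset_of_subset_of_ne hsub2
            (fun h => hfmem.2 (h ▸ hfmem.1))) hIfin.diff
        omega
      -- so it contains a circuit, which must contain f and avoid g
      have : ∃ C ∈ 𝒞, C ⊆ insert f (K \ {g}) := by
        by_contra hcc
        push_neg at hcc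
        exact hTdep ⟨hTE, fun C hC hCs => hcc C hC hCs⟩
      obtain ⟨C, hC, hCs⟩ := this
      have hfC : f ∈ C := by
        by_contra hfC
        exact hK.2 C hC (fun x hx => ((hCs hx).resolve_left
          (fun h => hfC (h ▸ hx))).1)
      have hgC : g ∉ C := fun hgC => by
        rcases hCs hgC with h | h
        · exact hfg h.symm
        · exact h.2 rfl
      exact ⟨C, hC, hCs, hfC, hgC⟩
    -- K \ I is nonempty since K is bigger than I
    have hKI : (K \ I).Nonempty := by
      rw [nonempty_iff_ne_empty]
      intro h
      have : K ⊆ I := diff_eq_empty.mp h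
      have := ncard_le_ncard this hIfin
      omega
    obtain ⟨g₀, hg₀⟩ := hKI
    obtain ⟨C, hC, hCs, hfC, hgC⟩ := hdep g₀ hg₀
    -- C has an element h outside I
    have : ∃ h ∈ C, h ∉ I := by
      by_contra hcc
      push_neg at hcc
      exact hI.2 C hC hcc
    obtain ⟨h, hhC, hhI⟩ := this
    have hhKI : h ∈ K \ I := by
      rcases hCs hhC with h' | h'
      · exact absurd (h' ▸ hfI) hhI
      · exact ⟨h'.1, hhI⟩
    obtain ⟨C', hC', hC's, hfC', hgC'⟩ := hdep h hhKI
    have hCC' : C ≠ C' := fun hcc => hgC' (hcc ▸ hhC)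
    obtain ⟨C'', hC'', hC''s⟩ := helim C hC C' hC' hCC' f ⟨hfC, hfC'⟩
    refine hK.2 C'' hC'' fun x hx => ?_
    obtain ⟨hxu, hxf⟩ := hC''s hx
    rcases hxu with h' | h'
    · rcases hCs h' with h'' | h''
      · exact absurd h'' hxf
      · exact h''.1
    · rcases hC's h' with h'' | h''
      · exact absurd h'' hxf
      · exact h''.1

/-- Every dependent set in a matroid with finite ground set contains a minimal dependent set. -/
lemma exists_minimal_dep {M : Matroid α} (hfin : M.E.Finite) {D : Set α} (hD : M.Dep D) :
    ∃ C ⊆ D, Minimal M.Dep C := by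
  set S : Set (Set α) := {Y | M.Dep Y ∧ Y ⊆ D} with hS
  have hne : ((fun Y => Y.ncard) '' S).Nonempty := ⟨_, D, ⟨hD, subset_rfl⟩, rfl⟩
  obtain ⟨C, ⟨hCdep, hCD⟩, hCmin⟩ : ∃ C ∈ S, C.ncard = sInf ((fun Y => Y.ncard) '' S) := by
    obtain ⟨C, hC, hC'⟩ := Nat.sInf_mem hne
    exact ⟨C, hC, hC'⟩
  refine ⟨C, hCD, hCdep, fun Y hY hYC => ?_⟩
  have hYS : Y ∈ S := ⟨hY, hYC.trans hCD⟩
  have : sInf ((fun Y => Y.ncard) '' S) ≤ Y.ncard := Nat.sInf_le ⟨_, hYS, rfl⟩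
  have hCfin : C.Finite := hfin.subset hCdep.subset_ground
  exact (eq_of_subset_of_ncard_le hYC (by omega) hCfin) ▸ subset_rfl

/-- In a finite matroid whose minimal dependent sets are `𝒞`,
a subset of the ground set containing no member of `𝒞` is independent. -/
lemma indep_of_no_circuit {M : Matroid α} (hfin : M.E.Finite) {𝒞 : Set (Set α)}
    (hcirc : ∀ C : Set α, Minimal M.Dep C ↔ C ∈ 𝒞) {I : Set α} (hIE : I ⊆ M.E)
    (h : ∀ C ∈ 𝒞, ¬ C ⊆ I) : M.Indep I := by
  by_contra hI
  obtain ⟨C, hCI, hC⟩ := exists_minimal_dep hfin ((M.dep_iff).mpr ⟨hI, hIE⟩)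
  exact h C ((hcirc C).mp hC) hCI

lemma matroid_elim {M : Matroid α} (hfin : M.E.Finite) {𝒞 : Set (Set α)}
    (hinc : PairwiseIncomparable 𝒞)
    (hcirc : ∀ C : Set α, Minimal M.Dep C ↔ C ∈ 𝒞) {A B : Set α}
    (hA : A ∈ 𝒞) (hB : B ∈ 𝒞) (hAB : A ≠ B) {e : α} (he : e ∈ A ∩ B) :
    ∃ C ∈ 𝒞, C ⊆ (A ∪ B) \ {e} := by
  have hAm : Minimal M.Dep A := (hcirc A).mpr hA
  have hBm : Minimal M.Dep B := (hcirc B).mpr hB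
  have hAE : A ⊆ M.E := hAm.prop.subset_ground
  have hBE : B ⊆ M.E := hBm.prop.subset_ground
  set X := A ∪ B with hX
  have hXE : X ⊆ M.E := union_subset hAE hBE
  have hXfin : X.Finite := hfin.subset hXE
  by_contra hcon
  push_neg at hcon
  -- X \ {e} is independent
  have hDindep : M.Indep (X \ {e}) :=
    indep_of_no_circuit hfin hcirc ((diff_subset).trans hXE)
      (fun C hC hCs => hcon C hC hCs)
  -- pick f ∈ B \ A
  have hBA : (B \ A).Nonempty := by
    rw [nonempty_iff_ne_empty]
    intro h
    exact hAB ((hinc B hB A hA (diff_eq_empty.mp h)).symm)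
  obtain ⟨f, hfB, hfA⟩ := hBA
  -- B \ {f} is independent
  have hBf : M.Indep (B \ {f}) := by
    refine indep_of_no_circuit hfin hcirc ((diff_subset).trans hBE) fun C hC hCs => ?_
    have : C = B := hinc C hC B hB (hCs.trans diff_subset)
    exact ((this ▸ hCs) hfB).2 rfl
  -- extend B \ {f} to a basis J of X
  obtain ⟨J, hJ, hBfJ⟩ := hBf.subset_isBasis_of_subset
    (diff_subset.trans (subset_union_right)) hXE
  have hJindep : M.Indep J := hJ.indep
  have hfJ : f ∉ J := by
    intro hfJ
    have : B ⊆ J := by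
      intro x hx
      rcases eq_or_ne x f with rfl | hxf
      · exact hfJ
      · exact hBfJ ⟨hx, hxf⟩
    exact (Matroid.dep_iff.mp hBm.prop).1 (hJindep.subset this)
  have hAJ : ∃ g ∈ A, g ∉ J := by
    by_contra h
    push_neg at h
    exact (Matroid.dep_iff.mp hAm.prop).1 (hJindep.subset h)
  obtain ⟨g, hgA, hgJ⟩ := hAJ
  have hfg : f ≠ g := fun h => hfA (h ▸ hgA)
  -- extend X \ {e} to a basis J' of X
  obtain ⟨J', hJ', hDJ'⟩ := hDindep.subset_isBasis_of_subset diff_subset hXE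
  have hcard := hJ.encard_eq_encard hJ'
  have hJfin : J.Finite := hfin.subset hJ.indep.subset_ground
  have hJ'fin : J'.Finite := hfin.subset hJ'.indep.subset_ground
  have hncard : J.ncard = J'.ncard := by
    rw [ncard_def, ncard_def, hcard]
  -- counting
  have hJsub : J ⊆ X \ {f, g} := fun x hx =>
    ⟨hJ.subset hx, by rintro (rfl | rfl) <;> [exact hfJ hx; exact hgJ hx]⟩
  have hfgX : ({f, g} : Set α) ⊆ X := by
    rintro x (rfl | rfl)
    · exact Or.inr hfB
    · exact Or.inl hgA
  have h2 : ({f, g} : Set α).ncard = 2 := ncard_pair hfg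
  have hJle : J.ncard ≤ X.ncard - 2 := by
    have := ncard_le_ncard hJsub hXfin.diff
    rwa [ncard_diff hfgX (toFinite _), h2] at this
  have hJ'ge : X.ncard - 1 ≤ J'.ncard := by
    have h1 := ncard_le_ncard hDJ' hJ'fin
    rwa [ncard_diff_singleton_of_mem (show e ∈ X from Or.inl he.1)] at h1
  have hX2 : 2 ≤ X.ncard := h2 ▸ ncard_le_ncard hfgX hXfin
  omega

lemma ne_of_isModularPair {𝒞 : Set (Set α)} (hinc : PairwiseIncomparable 𝒞)
    {A B : Set α} (hA : A ∈ 𝒞) (hB : B ∈ 𝒞) (hm : IsModularPair 𝒞 A B) : A ≠ B := by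
  rintro rfl
  obtain ⟨c, hc, hmem⟩ := hm.1
  have key : ∀ Z ∈ unionsOf 𝒞, Z ⊆ A → Z = ∅ ∨ Z = A := by
    rintro Z ⟨𝒯, h𝒯, rfl⟩ hZA
    have h𝒯' : 𝒯 ⊆ {A} := fun t ht => by
      have : t ⊆ A := (subset_sUnion_of_mem ht).trans hZA
      exact hinc t (h𝒯 ht) A hA this
    rcases subset_singleton_iff_eq.mp h𝒯' with rfl | rfl
    · exact Or.inl (by simp)
    · exact Or.inr (by simp)
  have h01 : c 0 ⊂ c 1 := hc (by decide)
  have h12 : c 1 ⊂ c 2 := hc (by decide)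
  have hsub : c 1 ⊆ A := (hmem 1).2.trans (by simp)
  rcases key (c 1) (hmem 1).1 hsub with h | h
  · rw [h] at h01
    exact h01.ne ((subset_empty_iff.mp h01.subset).symm ▸ rfl)
  · have h2A : c 2 ⊆ A := (hmem 2).2.trans (by simp)
    exact h12.not_subset (h ▸ h2A)

/-- **Corollary.** A collection of pairwise incomparable nonempty subsets of a
finite set `E` is the set of circuits of a matroid on `E` if (and only if)
elimination holds for all modular pairs. -/
theorem circuitSet_iff_modular_elim (E : Set α) (hE : E.Finite)
    (𝒞 : Set (Set α)) (hsub : ∀ C ∈ 𝒞, C ⊆ E)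
    (hne : ∀ C ∈ 𝒞, C.Nonempty)
    (hinc : PairwiseIncomparable 𝒞) :
    IsCircuitSetOf 𝒞 E ↔
      ∀ A ∈ 𝒞, ∀ B ∈ 𝒞, IsModularPair 𝒞 A B → Elim 𝒞 A B := by
  constructor
  · rintro ⟨M, hME, hcirc⟩ A hA B hB hm e he
    have hfin : M.E.Finite := hME ▸ hE
    exact matroid_elim hfin hinc hcirc hA hB (ne_of_isModularPair hinc hA hB hm) he
  · intro hmod
    have helim : ∀ A ∈ 𝒞, ∀ B ∈ 𝒞, A ≠ B → ∀ e ∈ A ∩ B, ∃ C ∈ 𝒞, C ⊆ (A ∪ B) \ {e} :=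
      fun A hA B hB hAB e he =>
        full_elim hE hsub hne hinc hmod ((A ∪ B).ncard) A hA B hB hAB le_rfl e he
    set M : Matroid α := (IndepMatroid.ofFinite hE (CIndep E 𝒞)
      ⟨empty_subset E, fun C hC h => (hne C hC).ne_empty (subset_empty_iff.mp h)⟩
      (fun I J hJ hIJ => hJ.subset hIJ)
      (cIndep_aug hE helim)
      (fun I hI => hI.1)).matroid with hM
    have hMindep : ∀ I, M.Indep I ↔ CIndep E 𝒞 I := fun I => by
      rw [hM, IndepMatroid.matroid_indep_iff]; rfl
    have hME : M.E = E := rfl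
    have hdep : ∀ D, M.Dep D ↔ (D ⊆ E ∧ ∃ C ∈ 𝒞, C ⊆ D) := by
      intro D
      rw [Matroid.dep_iff, hMindep, hME]
      constructor
      · rintro ⟨hD, hDE⟩
        refine ⟨hDE, ?_⟩
        by_contra h
        push_neg at h
        exact hD ⟨hDE, h⟩
      · rintro ⟨hDE, C, hC, hCD⟩
        exact ⟨fun h => h.2 C hC hCD, hDE⟩
    refine ⟨M, hME, fun C => ?_⟩
    constructor
    · rintro ⟨hCdep, hCmin⟩
      obtain ⟨hCE, C', hC', hC'C⟩ := (hdep C).mp hCdep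
      have : C ⊆ C' := hCmin ((hdep C').mpr ⟨(hsub C' hC'), C', hC', subset_rfl⟩) hC'C
      exact (this.antisymm hC'C) ▸ hC'
    · intro hC
      refine ⟨(hdep C).mpr ⟨hsub C hC, C, hC, subset_rfl⟩, fun Y hY hYC => ?_⟩
      obtain ⟨hYE, C', hC', hC'Y⟩ := (hdep Y).mp hY
      exact (hinc C' hC' C hC (hC'Y.trans hYC)) ▸ hC'Y
end

section
/- Let 𝔠 ⊆ {−1,0,+1}^E be a ℤ₂-invariant simple collection of signed subsets of a finite set E with pairwise incomparable supports. If the oriented elimination property 𝒪ℰ(X, Y, 𝔠) holds for all X, Y ∈ 𝔠 whose supports form a modular pair in the set of supports, then the collection of supports {supp(X) : X ∈ 𝔠} is the set of circuits of a matroid on E. -/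
open Set

variable {α : Type*}

/-- The support of a signed subset `X : α → SignType`. -/
def sSupp (X : α → SignType) : Set α := {e | X e ≠ 0}

/-- `𝔠` is invariant under the `ℤ₂`-action of switching signs. -/
def Z2Invariant (𝔠 : Set (α → SignType)) : Prop :=
  ∀ X ∈ 𝔠, (fun e => -(X e)) ∈ 𝔠

/-- `𝔠` is simple: equal supports force equality up to global sign. -/
def SimpleFam (𝔠 : Set (α → SignType)) : Prop :=
  ∀ X ∈ 𝔠, ∀ Y ∈ 𝔠, sSupp X = sSupp Y → X = Y ∨ X = fun e => -(Y e)

/-- The oriented elimination property `𝒪ℰ(X, Y, 𝔠)`. -/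
def OElim (𝔠 : Set (α → SignType)) (X Y : α → SignType) : Prop :=
  ∀ e f : α, X e = -(Y e) → X e ≠ 0 → X f ≠ Y f →
    ∃ Z ∈ 𝔠, Z e = 0 ∧ Z f ≠ 0 ∧ ∀ g : α, Z g = 0 ∨ Z g = X g ∨ Z g = Y g


private lemma key_elim (E : Set α) (hE : E.Finite)
    (𝔠 : Set (α → SignType))
    (hsub : ∀ X ∈ 𝔠, sSupp X ⊆ E)
    (hne : ∀ X ∈ 𝔠, (sSupp X).Nonempty)
    (hinc : PairwiseIncomparable {S | ∃ X ∈ 𝔠, S = sSupp X})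
    (hZ2 : Z2Invariant 𝔠)
    (hmod : ∀ X ∈ 𝔠, ∀ Y ∈ 𝔠,
      IsModularPair {S | ∃ W ∈ 𝔠, S = sSupp W} (sSupp X) (sSupp Y) →
      OElim 𝔠 X Y) :
    ∀ n : ℕ, ∀ A ∈ {S | ∃ X ∈ 𝔠, S = sSupp X}, ∀ B ∈ {S | ∃ X ∈ 𝔠, S = sSupp X},
      (A ∪ B).ncard ≤ n → A ≠ B → ∀ e ∈ A ∩ B,
      ∃ C ∈ {S | ∃ X ∈ 𝔠, S = sSupp X}, C ⊆ (A ∪ B) \ {e} := by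
  classical
  set 𝒞 : Set (Set α) := {S | ∃ X ∈ 𝔠, S = sSupp X} with h𝒞
  have hne' : ∀ C ∈ 𝒞, C.Nonempty := by rintro C ⟨X, hX, rfl⟩; exact hne X hX
  have hsub' : ∀ C ∈ 𝒞, C ⊆ E := by rintro C ⟨X, hX, rfl⟩; exact hsub X hX
  have hfin : ∀ C ∈ 𝒞, C.Finite := fun C hC => hE.subset (hsub' C hC)
  have hnegzero : ∀ s : SignType, -s = 0 ↔ s = 0 := by decide
  have hsuppneg : ∀ X : α → SignType, sSupp (fun e => -(X e)) = sSupp X := by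
    intro X; ext g; simp [sSupp, hnegzero]
  intro n
  induction n with
  | zero =>
    intro A hA B hB hn _ e _
    have h1 : (A ∪ B).Nonempty := (hne' A hA).mono subset_union_left
    have hfinAB : (A ∪ B).Finite := (hfin A hA).union (hfin B hB)
    have := (ncard_pos hfinAB).mpr h1
    omega
  | succ n ih =>
    intro A hA B hB hn hAB e he
    by_cases hmp : IsModularPair 𝒞 A B
    · -- modular pair case: use oriented elimination
      obtain ⟨X, hX, rfl⟩ := hA
      obtain ⟨Y, hY, rfl⟩ := hB
      have hXe : X e ≠ 0 := he.1
      have hYe : Y e ≠ 0 := he.2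
      set Y' : α → SignType := if X e = Y e then (fun g => -(Y g)) else Y with hY'def
      have hY' : Y' ∈ 𝔠 := by
        rw [hY'def]; split
        · exact hZ2 Y hY
        · exact hY
      have hY'supp : sSupp Y' = sSupp Y := by
        rw [hY'def]; split
        · exact hsuppneg Y
        · rfl
      have hXeY' : X e = -(Y' e) := by
        rw [hY'def]; split
        · next h => rw [h]; simp
        · next h =>
          cases hx : X e <;> cases hy : Y e <;> simp_all
      have hnsub : ¬ sSupp X ⊆ sSupp Y := by
        intro h
        exact hAB (hinc _ ⟨X, hX, rfl⟩ _ ⟨Y, hY, rfl⟩ h)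
      obtain ⟨f, hfX, hfY⟩ := not_subset.mp hnsub
      have hfX' : X f ≠ 0 := hfX
      have hXfY' : X f ≠ Y' f := by
        have h0 : Y' f = 0 := by
          have : f ∉ sSupp Y' := hY'supp ▸ hfY
          simpa [sSupp] using this
        rw [h0]; exact hfX'
      obtain ⟨Z, hZ, hZe, hZf, hZg⟩ :=
        hmod X hX Y' hY' (by rw [hY'supp]; exact hmp) e f hXeY' hXe hXfY'
      refine ⟨sSupp Z, ⟨Z, hZ, rfl⟩, ?_⟩
      intro g hg
      have hgZ : Z g ≠ 0 := hg
      refine ⟨?_, ?_⟩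
      · rcases hZg g with h | h | h
        · exact absurd h hgZ
        · exact Or.inl (fun h0 => hgZ (h.trans h0))
        · right
          rw [← hY'supp]
          exact fun h0 => hgZ (h.trans h0)
      · simp only [mem_singleton_iff]
        rintro rfl
        exact hgZ hZe
    · -- non-modular case
      have hBA : ¬ B ⊆ A := fun h => hAB (hinc B hB A hA h).symm
      have hfinAB : (A ∪ B).Finite := (hfin A hA).union (hfin B hB)
      have h2 : HasChainBelow (unionsOf 𝒞) (A ∪ B) 2 := by
        refine ⟨![∅, A, A ∪ B], ?_, ?_⟩
        · rw [Fin.strictMono_iff_lt_succ]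
          intro i
          fin_cases i
          · show (∅ : Set α) < A
            exact (empty_ssubset).mpr (hne' A hA)
          · show A < A ∪ B
            refine lt_of_le_of_ne subset_union_left ?_
            intro h
            exact hBA (h ▸ subset_union_right)
        · intro i
          fin_cases i
          · exact ⟨⟨∅, empty_subset _, by simp⟩, empty_subset _⟩
          · exact ⟨⟨{A}, singleton_subset_iff.mpr hA, (sUnion_singleton A).symm⟩,
              subset_union_left⟩
          · exact ⟨⟨{A, B}, by rintro S (rfl | rfl); exacts [hA, hB], (sUnion_pair A B).symm⟩,
              subset_rfl⟩
      have h3 : HasChainBelow (unionsOf 𝒞) (A ∪ B) 3 := by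
        by_contra h3
        exact hmp ⟨h2, h3⟩
      obtain ⟨c, hcmono, hcmem⟩ := h3
      have h01 : c 0 < c 1 := hcmono (show (0 : Fin 4) < 1 by decide)
      have h12 : c 1 < c 2 := hcmono (show (1 : Fin 4) < 2 by decide)
      have h23 : c 2 < c 3 := hcmono (show (2 : Fin 4) < 3 by decide)
      have hc2AB : c 2 ⊂ A ∪ B := lt_of_lt_of_le h23 (hcmem 3).2
      obtain ⟨x, hx2, hx1⟩ := exists_of_ssubset h12
      obtain ⟨𝒯₂, h𝒯₂sub, h𝒯₂eq⟩ := (hcmem 2).1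
      rw [h𝒯₂eq] at hx2
      obtain ⟨D2, hD2𝒯, hxD2⟩ := hx2
      have hD2 : D2 ∈ 𝒞 := h𝒯₂sub hD2𝒯
      have hD2c2 : D2 ⊆ c 2 := by
        have := subset_sUnion_of_mem hD2𝒯
        rwa [← h𝒯₂eq] at this
      obtain ⟨w, hw1, _⟩ := exists_of_ssubset h01
      obtain ⟨𝒯₁, h𝒯₁sub, h𝒯₁eq⟩ := (hcmem 1).1
      rw [h𝒯₁eq] at hw1
      obtain ⟨D1, hD1𝒯, hwD1⟩ := hw1
      have hD1 : D1 ∈ 𝒞 := h𝒯₁sub hD1𝒯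
      have hD1c1 : D1 ⊆ c 1 := by
        have := subset_sUnion_of_mem hD1𝒯
        rwa [← h𝒯₁eq] at this
      have hD1D2 : D1 ≠ D2 := by
        rintro rfl
        exact hx1 (hD1c1 hxD2)
      by_cases hdone : ∃ C ∈ 𝒞, C ⊆ (A ∪ B) \ {e}
      · exact hdone
      · push_neg at hdone
        have hecirc : ∀ D ∈ 𝒞, D ⊆ A ∪ B → e ∈ D := by
          intro D hD hDs
          by_contra heD
          exact hdone D hD (fun z hz => ⟨hDs hz, fun h => heD (h ▸ hz)⟩)
        have hD1AB : D1 ⊆ A ∪ B := hD1c1.trans (hcmem 1).2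
        have hD2AB : D2 ⊆ A ∪ B := hD2c2.trans (hcmem 2).2
        have heD1 : e ∈ D1 := hecirc D1 hD1 hD1AB
        have heD2 : e ∈ D2 := hecirc D2 hD2 hD2AB
        have hcard : (D1 ∪ D2).ncard ≤ n := by
          have hsub12 : D1 ∪ D2 ⊆ c 2 := union_subset (hD1c1.trans h12.le) hD2c2
          have hle : (D1 ∪ D2).ncard ≤ (c 2).ncard :=
            ncard_le_ncard hsub12 (hfinAB.subset (hcmem 2).2)
          have hlt : (c 2).ncard < (A ∪ B).ncard := ncard_lt_ncard hc2AB hfinAB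
          omega
        obtain ⟨C, hC, hCsub⟩ := ih D1 hD1 D2 hD2 hcard hD1D2 e ⟨heD1, heD2⟩
        exact ⟨C, hC, hCsub.trans (diff_subset_diff_left (union_subset hD1AB hD2AB))⟩

private lemma circuit_matroid' {E : Set α} (hE : E.Finite) (𝒞 : Set (Set α))
    (hne : ∀ C ∈ 𝒞, C.Nonempty) (hsub : ∀ C ∈ 𝒞, C ⊆ E)
    (hinc : PairwiseIncomparable 𝒞)
    (helim : ∀ A ∈ 𝒞, ∀ B ∈ 𝒞, A ≠ B → ∀ e ∈ A ∩ B, ∃ C ∈ 𝒞, C ⊆ (A ∪ B) \ {e}) :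
    ∃ M : Matroid α, M.E = E ∧ ∀ C : Set α, Minimal M.Dep C ↔ C ∈ 𝒞 := by
  classical
  set Indep : Set α → Prop := fun I => I ⊆ E ∧ ∀ C ∈ 𝒞, ¬ C ⊆ I with hIndepDef
  have indep_empty : Indep ∅ :=
    ⟨empty_subset E, fun C hC h => (hne C hC).ne_empty (subset_empty_iff.mp h)⟩
  have indep_subset : ∀ ⦃I J : Set α⦄, Indep J → I ⊆ J → Indep I := by
    rintro I J ⟨hJE, hJ⟩ hIJ
    exact ⟨hIJ.trans hJE, fun C hC h => hJ C hC (h.trans hIJ)⟩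
  have indep_aug : ∀ ⦃I J : Set α⦄, Indep I → Indep J → I.ncard < J.ncard →
      ∃ e ∈ J, e ∉ I ∧ Indep (insert e I) := by
    intro I J hI hJ hcard
    by_contra hcon
    push_neg at hcon
    have hIfin : I.Finite := hE.subset hI.1
    have hJfin : J.Finite := hE.subset hJ.1
    set P : Set α → Prop := fun K => K ⊆ I ∪ J ∧ Indep K ∧ I.ncard < K.ncard with hP
    have hSne : ∃ n, ∃ K, P K ∧ (I \ K).ncard = n := ⟨_, J, ⟨subset_union_right, hJ, hcard⟩, rfl⟩
    obtain ⟨K, hK, hKn⟩ := Nat.find_spec hSne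
    have hminim : ∀ K', P K' → Nat.find hSne ≤ (I \ K').ncard :=
      fun K' h => Nat.find_le ⟨K', h, rfl⟩
    have hKfin : K.Finite := hE.subset hK.2.1.1
    have hInK : ¬ I ⊆ K := by
      intro hIK
      have h2 : ¬ K ⊆ I := fun h => absurd (ncard_le_ncard h hIfin) (not_le.mpr hK.2.2)
      obtain ⟨e, heK, heI⟩ := not_subset.mp h2
      have heJ : e ∈ J := (hK.1 heK).resolve_left heI
      exact hcon e heJ heI (indep_subset hK.2.1 (insert_subset heK hIK))
    obtain ⟨x, hxI, hxK⟩ := not_subset.mp hInK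
    have hCy : ∀ y ∈ K \ I, ∃ C ∈ 𝒞, C ⊆ insert x (K \ {y}) ∧ x ∈ C ∧ y ∉ C := by
      rintro y ⟨hyK, hyI⟩
      set T := insert x (K \ {y}) with hT
      have hTsub : T ⊆ I ∪ J := insert_subset (Or.inl hxI) (diff_subset.trans hK.1)
      have hKpos : 1 ≤ K.ncard := lt_of_le_of_lt (Nat.zero_le _) hK.2.2
      have hTcard : T.ncard = K.ncard := by
        rw [hT, ncard_insert_of_notMem (fun h => hxK h.1) hKfin.diff,
          ncard_diff_singleton_of_mem hyK]
        omega
      have hITdiff : I \ T = (I \ K) \ {x} := by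
        rw [hT]
        ext z
        simp only [mem_diff, mem_insert_iff, mem_singleton_iff, not_or]
        constructor
        · rintro ⟨hzI, hzx, hzK⟩
          refine ⟨⟨hzI, fun hz => hzK ⟨hz, ?_⟩⟩, hzx⟩
          rintro rfl; exact hyI hzI
        · rintro ⟨⟨hzI, hzK⟩, hzx⟩
          exact ⟨hzI, hzx, fun h => hzK h.1⟩
      have hxIK : x ∈ I \ K := ⟨hxI, hxK⟩
      have hlt : (I \ T).ncard < Nat.find hSne := by
        rw [hITdiff, ← hKn, ncard_diff_singleton_of_mem hxIK]
        have hxmem : (I \ K).Nonempty := ⟨x, hxI, hxK⟩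
        have : 0 < (I \ K).ncard := (ncard_pos hIfin.diff).mpr hxmem
        omega
      have hTdep : ¬ Indep T := by
        intro hTind
        exact absurd (hminim T ⟨hTsub, hTind, hTcard ▸ hK.2.2⟩) (not_le.mpr hlt)
      have : ¬ (T ⊆ E ∧ ∀ C ∈ 𝒞, ¬ C ⊆ T) := hTdep
      push_neg at this
      obtain ⟨C, hC, hCT⟩ := this (hTsub.trans (union_subset hI.1 hJ.1))
      refine ⟨C, hC, hCT, ?_, ?_⟩
      · by_contra hxC
        have hCK : C ⊆ K := fun z hz => by
          rcases hCT hz with h | h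
          · subst h; exact (hxC hz).elim
          · exact h.1
        exact hK.2.1.2 C hC hCK
      · intro hyC
        rcases hCT hyC with h | h
        · exact hyI (h ▸ hxI)
        · exact h.2 rfl
    have hKI : (K \ I).Nonempty := by
      rw [nonempty_iff_ne_empty]
      intro h
      have hKsubI : K ⊆ I := by rwa [diff_eq_empty] at h
      exact absurd (ncard_le_ncard hKsubI hIfin) (not_le.mpr hK.2.2)
    obtain ⟨y0, hy0⟩ := hKI
    obtain ⟨C, hC, hCsub, hxC, hy0C⟩ := hCy y0 hy0
    have hzex : ∃ z, z ∈ C ∧ z ∈ K \ I := by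
      by_contra h
      push_neg at h
      have hCI : C ⊆ I := by
        intro z hz
        rcases hCsub hz with h1 | h1
        · exact h1 ▸ hxI
        · by_contra hzI
          exact (h z hz) ⟨h1.1, hzI⟩
      exact hI.2 C hC hCI
    obtain ⟨z, hzC, hzKI⟩ := hzex
    obtain ⟨C', hC', hC'sub, hxC', hzC'⟩ := hCy z hzKI
    have hCC' : C ≠ C' := fun h => hzC' (h ▸ hzC)
    obtain ⟨D, hD, hDsub⟩ := helim C hC C' hC' hCC' x ⟨hxC, hxC'⟩
    have hDK : D ⊆ K := by
      intro w hw
      have h1 := hDsub hw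
      rcases h1.1 with h | h
      · rcases hCsub h with h2 | h2
        · exact absurd h2 h1.2
        · exact h2.1
      · rcases hC'sub h with h2 | h2
        · exact absurd h2 h1.2
        · exact h2.1
    exact hK.2.1.2 D hD hDK
  refine ⟨(IndepMatroid.ofFinite hE Indep indep_empty indep_subset indep_aug
    (fun I hI => hI.1)).matroid, rfl, ?_⟩
  set M := (IndepMatroid.ofFinite hE Indep indep_empty indep_subset indep_aug
    (fun I hI => hI.1)).matroid with hM
  have hMindep : ∀ I, M.Indep I ↔ Indep I := by
    intro I; rw [hM, IndepMatroid.matroid_indep_iff, IndepMatroid.ofFinite_indep]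
  have hME : M.E = E := rfl
  have hdep : ∀ D, M.Dep D ↔ (D ⊆ E ∧ ∃ C ∈ 𝒞, C ⊆ D) := by
    intro D
    rw [Matroid.Dep, hMindep, hME]
    constructor
    · rintro ⟨h1, h2⟩
      refine ⟨h2, ?_⟩
      by_contra h
      push_neg at h
      exact h1 ⟨h2, h⟩
    · rintro ⟨h1, C, hC, hCD⟩
      exact ⟨fun h => h.2 C hC hCD, h1⟩
  intro C
  constructor
  · rintro ⟨hCdep, hCmin⟩
    obtain ⟨hCE, D, hD, hDC⟩ := (hdep C).mp hCdep
    have hDdep : M.Dep D := (hdep D).mpr ⟨(hsub D hD), D, hD, subset_rfl⟩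
    have h2 : C ⊆ D := hCmin hDdep hDC
    have : D = C := subset_antisymm hDC h2
    exact this ▸ hD
  · intro hC
    refine ⟨(hdep C).mpr ⟨hsub C hC, C, hC, subset_rfl⟩, ?_⟩
    intro D hDdep hDC
    obtain ⟨_, D', hD', hD'D⟩ := (hdep D).mp hDdep
    have : D' = C := hinc D' hD' C hC (hD'D.trans hDC)
    exact this ▸ hD'D

/-- **Corollary (oriented matroids).** If a `ℤ₂`-invariant simple collection of
signed subsets of a finite set `E` with pairwise incomparable (nonempty)
supports satisfies oriented elimination for all pairs whose supports form a
modular pair, then the collection of supports is the set of circuits of a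
matroid on `E`. -/
theorem supports_circuitSet_of_modular_oelim (E : Set α) (hE : E.Finite)
    (𝔠 : Set (α → SignType))
    (hsub : ∀ X ∈ 𝔠, sSupp X ⊆ E)
    (hne : ∀ X ∈ 𝔠, (sSupp X).Nonempty)
    (hinc : PairwiseIncomparable {S | ∃ X ∈ 𝔠, S = sSupp X})
    (hZ2 : Z2Invariant 𝔠) (hsimple : SimpleFam 𝔠)
    (hmod : ∀ X ∈ 𝔠, ∀ Y ∈ 𝔠,
      IsModularPair {S | ∃ W ∈ 𝔠, S = sSupp W} (sSupp X) (sSupp Y) →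
      OElim 𝔠 X Y) :
    IsCircuitSetOf {S | ∃ X ∈ 𝔠, S = sSupp X} E := by
  classical
  have hne' : ∀ C ∈ {S | ∃ X ∈ 𝔠, S = sSupp X}, C.Nonempty := by
    rintro C ⟨X, hX, rfl⟩; exact hne X hX
  have hsub' : ∀ C ∈ {S | ∃ X ∈ 𝔠, S = sSupp X}, C ⊆ E := by
    rintro C ⟨X, hX, rfl⟩; exact hsub X hX
  exact circuit_matroid' hE _ hne' hsub' hinc
    (fun A hA B hB hAB e he =>
      key_elim E hE 𝔠 hsub hne hinc hZ2 hmod (A ∪ B).ncard A hA B hB le_rfl hAB e he)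
end

section
/- For signed subsets X, Y of E, the oriented elimination property 𝒪ℰ(X, Y, 𝔠) implies the (unsigned) elimination property ℰ(supp(X), supp(Y), 𝒞), where 𝒞 = {supp(W) : W ∈ 𝔠}, provided 𝔠 is ℤ₂-invariant and simple and supp(X) ≠ supp(Y). -/
open Set

variable {α : Type*}

lemma sneg_ne_zero {x : SignType} (h : x ≠ 0) : -x ≠ 0 := by
  cases x <;> simp_all

/-- **Oriented elimination implies unsigned elimination.** If `𝔠` is
`ℤ₂`-invariant and simple, the supports of `X` and `Y` are distinct and
incomparable, and oriented elimination holds between `X` and `Y` (and hence,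
replacing `Y` by `-Y`, between `X` and `-Y`), then the unsigned elimination
property holds between `supp X` and `supp Y` in the family of supports. -/
theorem elim_of_oelim (𝔠 : Set (α → SignType))
    (hZ2 : Z2Invariant 𝔠) (hsimple : SimpleFam 𝔠)
    (X Y : α → SignType) (hX : X ∈ 𝔠) (hY : Y ∈ 𝔠)
    (hne : sSupp X ≠ sSupp Y)
    (hincXY : ¬ sSupp X ⊆ sSupp Y) (hincYX : ¬ sSupp Y ⊆ sSupp X)
    (hOE : OElim 𝔠 X Y) (hOE' : OElim 𝔠 X (fun e => -(Y e))) :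
    Elim {S | ∃ W ∈ 𝔠, S = sSupp W} (sSupp X) (sSupp Y) := by
  intro e he
  obtain ⟨heX, heY⟩ := he
  obtain ⟨f, hfY, hfX⟩ := not_subset.mp hincYX
  have hfX0 : X f = 0 := by simpa [sSupp] using hfX
  have hfY0 : Y f ≠ 0 := hfY
  have heX' : X e ≠ 0 := heX
  have heY' : Y e ≠ 0 := heY
  rcases (show X e = -(Y e) ∨ X e = Y e by
      revert heX' heY'; cases X e <;> cases Y e <;> decide) with h | h
  · obtain ⟨Z, hZ, hZe, hZf, hZg⟩ := hOE e f h heX'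
      (by rw [hfX0]; exact fun hh => hfY0 hh.symm)
    refine ⟨sSupp Z, ⟨Z, hZ, rfl⟩, fun g hg => ⟨?_, ?_⟩⟩
    · rcases hZg g with h0 | h1 | h2
      · exact absurd h0 hg
      · exact Or.inl (fun hh => hg (h1.trans hh))
      · exact Or.inr (fun hh => hg (h2.trans hh))
    · intro hge
      rw [Set.mem_singleton_iff] at hge
      subst hge; exact hg hZe
  · obtain ⟨Z, hZ, hZe, hZf, hZg⟩ := hOE' e f (by simpa using h) heX'
      (by show X f ≠ -Y f; rw [hfX0]; exact fun hh => sneg_ne_zero hfY0 hh.symm)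
    refine ⟨sSupp Z, ⟨Z, hZ, rfl⟩, fun g hg => ⟨?_, ?_⟩⟩
    · rcases hZg g with h0 | h1 | h2
      · exact absurd h0 hg
      · exact Or.inl (fun hh => hg (h1.trans hh))
      · refine Or.inr (fun hh => hg ?_)
        rw [h2]; simp [hh]
    · intro hge
      rw [Set.mem_singleton_iff] at hge
      subst hge; exact hg hZe
end

section
/- Let 𝒞 be a collection of pairwise incomparable finite subsets of a (possibly infinite) set E such that ℰ(A, B, 𝒞) holds for all modular pairs A, B ∈ 𝒞. Then 𝒞 satisfies the circuit axioms of a finitary matroid: its members are incomparable finite sets and the full elimination property ℰ(A, B, 𝒞) holds for all pairs A, B ∈ 𝒞. -/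
open Set

variable {α : Type*}

/-- **Corollary (finitary matroids).** A family of pairwise incomparable
finite subsets of a (possibly infinite) set satisfying elimination for all
modular pairs satisfies the full circuit axioms of a finitary matroid:
incomparable finite members and elimination for all pairs. -/
theorem finitary_circuit_axioms_of_modular_elim (𝒞 : Set (Set α))
    (hfin : ∀ C ∈ 𝒞, C.Finite)
    (hinc : PairwiseIncomparable 𝒞)
    (hmod : ∀ A ∈ 𝒞, ∀ B ∈ 𝒞, IsModularPair 𝒞 A B → Elim 𝒞 A B) :
    PairwiseIncomparable 𝒞 ∧ (∀ C ∈ 𝒞, C.Finite) ∧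
      ∀ A ∈ 𝒞, ∀ B ∈ 𝒞, A ≠ B → Elim 𝒞 A B := by
  refine ⟨hinc, hfin, ?_⟩
  have main : ∀ n, ∀ A ∈ 𝒞, ∀ B ∈ 𝒞, A ≠ B → (A ∪ B).ncard ≤ n → Elim 𝒞 A B := by
    intro n
    induction n with
    | zero =>
      intro A hA B hB hne hcard
      exfalso
      have hABfin : (A ∪ B).Finite := (hfin A hA).union (hfin B hB)
      have hAB0 : A ∪ B = ∅ := by
        have := Nat.le_zero.mp hcard
        rwa [Set.ncard_eq_zero hABfin] at this
      have hA0 : A = ∅ := by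
        apply eq_empty_of_subset_empty; rw [← hAB0]; exact subset_union_left
      have hB0 : B = ∅ := by
        apply eq_empty_of_subset_empty; rw [← hAB0]; exact subset_union_right
      exact hne (hA0.trans hB0.symm)
    | succ n ih =>
      intro A hA B hB hne hcard e he
      by_contra hno
      push_neg at hno
      have hABfin : (A ∪ B).Finite := (hfin A hA).union (hfin B hB)
      have hAne : A ≠ ∅ := by
        intro h; exact hne (hinc A hA B hB (by simp [h]))
      have hAssub : A ⊂ A ∪ B := by
        refine ⟨subset_union_left, fun h => ?_⟩
        exact hne ((hinc B hB A hA (fun x hx => h (Or.inr hx)))).symm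
      -- every circuit inside A ∪ B contains e
      have lemA : ∀ C ∈ 𝒞, C ⊆ A ∪ B → e ∈ C := by
        intro C hC hsub
        by_contra heC
        exact hno C hC (subset_diff_singleton hsub heC)
      -- any two distinct circuits inside A ∪ B union to A ∪ B
      have lemB : ∀ C ∈ 𝒞, ∀ D ∈ 𝒞, C ⊆ A ∪ B → D ⊆ A ∪ B → C ≠ D → C ∪ D = A ∪ B := by
        intro C hC D hD hCs hDs hCD
        by_contra hne'
        have hss : C ∪ D ⊂ A ∪ B := ⟨union_subset hCs hDs, fun h => hne' (subset_antisymm (union_subset hCs hDs) h)⟩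
        have hlt : (C ∪ D).ncard < (A ∪ B).ncard := Set.ncard_lt_ncard hss hABfin
        obtain ⟨W, hW, hWsub⟩ := ih C hC D hD hCD (by omega) e ⟨lemA C hC hCs, lemA D hD hDs⟩
        exact hno W hW (hWsub.trans (diff_subset_diff_left hss.subset))
      have hnm : ¬ IsModularPair 𝒞 A B := by
        intro h
        obtain ⟨W, hW, hWsub⟩ := hmod A hA B hB h e he
        exact hno W hW hWsub
      have hemp : (∅ : Set α) ∈ unionsOf 𝒞 := ⟨∅, empty_subset _, by simp⟩
      have hAu : A ∈ unionsOf 𝒞 := ⟨{A}, by simp [hA], by simp⟩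
      have hABu : A ∪ B ∈ unionsOf 𝒞 := ⟨{A, B}, by simp [insert_subset_iff, hA, hB], by simp⟩
      have hAeS : (∅ : Set α) ⊂ A := empty_ssubset.mpr (nonempty_iff_ne_empty.mpr hAne)
      have has2 : HasChainBelow (unionsOf 𝒞) (A ∪ B) 2 := by
        refine ⟨![∅, A, A ∪ B], ?_, ?_⟩
        · rw [Fin.strictMono_iff_lt_succ]
          intro i
          fin_cases i <;> simp [hAeS, hAssub, lt_iff_ssubset]
        · intro i
          fin_cases i <;>
            simp [hemp, hAu, hABu, empty_subset, subset_union_left]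
      have has3 : HasChainBelow (unionsOf 𝒞) (A ∪ B) 3 := by
        by_contra h3
        exact hnm ⟨has2, h3⟩
      obtain ⟨c, hmono, hc⟩ := has3
      have key : ∀ X Y : Set α, X ∈ unionsOf 𝒞 → Y ∈ unionsOf 𝒞 →
          X.Nonempty → X ⊂ Y → Y ⊂ A ∪ B → False := by
        intro X Y hXU hYU hXne hXY hYAB
        obtain ⟨𝒮, h𝒮, rfl⟩ := hXU
        obtain ⟨𝒯, h𝒯, rfl⟩ := hYU
        obtain ⟨x, hx⟩ := hXne
        obtain ⟨S, hS, hxS⟩ := hx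
        have hSX : S ⊆ ⋃₀ 𝒮 := subset_sUnion_of_mem hS
        have hSAB : S ⊆ A ∪ B := hSX.trans (hXY.subset.trans hYAB.subset)
        by_cases hall : ∀ T ∈ 𝒯, T = S
        · have hYS : ⋃₀ 𝒯 ⊆ S := sUnion_subset (fun T hT => (hall T hT) ▸ subset_refl S)
          exact hXY.not_subset (hYS.trans hSX)
        · push_neg at hall
          obtain ⟨T, hT, hTS⟩ := hall
          have hTY : T ⊆ ⋃₀ 𝒯 := subset_sUnion_of_mem hT
          have hTAB : T ⊆ A ∪ B := hTY.trans hYAB.subset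
          have hunion := lemB S (h𝒮 hS) T (h𝒯 hT) hSAB hTAB (fun h => hTS h.symm)
          exact hYAB.not_subset (hunion ▸ union_subset (hSX.trans hXY.subset) hTY)
      have h01 : c 0 ⊂ c 1 := hmono (by decide : (0 : Fin 4) < 1)
      have h12 : c 1 ⊂ c 2 := hmono (by decide : (1 : Fin 4) < 2)
      have h23 : c 2 ⊂ c 3 := hmono (by decide : (2 : Fin 4) < 3)
      rcases eq_empty_or_nonempty (c 0) with h0 | h0
      · have h1ne : (c 1).Nonempty := by
          rw [h0] at h01; exact empty_ssubset.mp h01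
        exact key (c 1) (c 2) (hc 1).1 (hc 2).1 h1ne h12 (h23.trans_subset (hc 3).2)
      · exact key (c 0) (c 1) (hc 0).1 (hc 1).1 h0 h01 (h12.trans_subset (hc 2).2)
  intro A hA B hB hne
  exact main (A ∪ B).ncard A hA B hB hne le_rfl
end
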